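/- Let q ≥ 1 and let A ∈ ℝ^{q×q} be a symmetric matrix with entries in {0,1} and zero diagonal. Suppose λ ∈ ℝ^q satisfies λ_i ≥ 0 for all i, Σ_{i=1}^q λ_i = q, and λ^T A λ ≥ q(q−1). Then λ_i = 1 for all i, and A = E^q (every off-diagonal entry of A equals 1). -/

import Mathlib

open Finset

/-- if A is a symmetric 0/1 matrix with zero diagonal and
λ ≥ 0 satisfies Σ λ_i = q and λᵀAλ ≥ q(q−1), then λ is the all-ones vector and
A = E^q, i.e. every off-diagonal entry of A equals 1. -/
theorem quadratic_form_rigidity (q : ℕ) (hq : 1 ≤ q)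
    (A : Matrix (Fin q) (Fin q) ℝ)
    (hsym : ∀ i j, A i j = A j i)
    (h01 : ∀ i j, A i j = 0 ∨ A i j = 1)
    (hdiag : ∀ i, A i i = 0)
    (lam : Fin q → ℝ) (hpos : ∀ i, 0 ≤ lam i) (hsum : ∑ i, lam i = (q : ℝ))
    (hquad : (q : ℝ) * ((q : ℝ) - 1) ≤ ∑ i : Fin q, ∑ j : Fin q, lam i * A i j * lam j) :
    (∀ i, lam i = 1) ∧ ∀ i j, i ≠ j → A i j = 1 := by
  -- Step 1: S ≤ q² - Σ λ_i²
  have hterm : ∀ i j : Fin q, lam i * A i j * lam j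
      ≤ lam i * lam j - (if i = j then lam i * lam j else 0) := by
    intro i j
    by_cases h : i = j
    · subst h; simp [hdiag i]
    · simp only [if_neg h, sub_zero]
      rcases h01 i j with h0 | h1
      · rw [h0]; nlinarith [hpos i, hpos j]
      · rw [h1]; nlinarith
  have hS_le : (∑ i : Fin q, ∑ j : Fin q, lam i * A i j * lam j)
      ≤ (q : ℝ) * q - ∑ i, (lam i) ^ 2 := by
    calc (∑ i : Fin q, ∑ j : Fin q, lam i * A i j * lam j)
        ≤ ∑ i : Fin q, ∑ j : Fin q,
            (lam i * lam j - if i = j then lam i * lam j else 0) := by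
          exact Finset.sum_le_sum fun i _ => Finset.sum_le_sum fun j _ => hterm i j
      _ = (∑ i, lam i) * (∑ j, lam j) - ∑ i, (lam i) ^ 2 := by
          rw [Finset.sum_mul_sum]
          rw [← Finset.sum_sub_distrib]
          congr 1
          ext i
          rw [Finset.sum_sub_distrib]
          simp [pow_two]
      _ = (q : ℝ) * q - ∑ i, (lam i) ^ 2 := by rw [hsum]
  -- Σ (λ_i - 1)^2 ≥ 0 gives Σ λ² ≥ q
  have hsq_ge : (q : ℝ) ≤ ∑ i, (lam i) ^ 2 := by
    have h0 : (0:ℝ) ≤ ∑ i, (lam i - 1) ^ 2 :=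
      Finset.sum_nonneg fun i _ => sq_nonneg _
    have hexp : ∑ i : Fin q, (lam i - 1) ^ 2
        = ∑ i, (lam i) ^ 2 - 2 * (∑ i, lam i) + q := by
      rw [Finset.sum_congr rfl (fun i _ => by ring :
        ∀ i ∈ Finset.univ, (lam i - 1)^2 = (lam i)^2 - 2 * lam i + 1)]
      simp [Finset.sum_add_distrib, Finset.sum_sub_distrib, Finset.mul_sum]
    rw [hexp, hsum] at h0
    linarith
  have hsq_le : ∑ i, (lam i) ^ 2 ≤ (q : ℝ) := by linarith
  have hsq : ∑ i, (lam i) ^ 2 = (q : ℝ) := le_antisymm hsq_le hsq_ge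
  -- each λ_i = 1
  have hlam : ∀ i, lam i = 1 := by
    have hz : ∑ i : Fin q, (lam i - 1) ^ 2 = 0 := by
      have hexp : ∑ i : Fin q, (lam i - 1) ^ 2
          = ∑ i, (lam i) ^ 2 - 2 * (∑ i, lam i) + q := by
        rw [Finset.sum_congr rfl (fun i _ => by ring :
          ∀ i ∈ Finset.univ, (lam i - 1)^2 = (lam i)^2 - 2 * lam i + 1)]
        simp [Finset.sum_add_distrib, Finset.sum_sub_distrib, Finset.mul_sum]
      rw [hexp, hsum, hsq]; ring
    intro i
    have := (Finset.sum_eq_zero_iff_of_nonneg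
      (fun i _ => sq_nonneg (lam i - 1))).mp hz i (Finset.mem_univ i)
    have : lam i - 1 = 0 := by
      exact pow_eq_zero_iff (by norm_num) |>.mp this
    linarith
  refine ⟨hlam, ?_⟩
  -- Now Σ_{i,j} A i j ≥ q(q-1)
  have hquad' : (q : ℝ) * ((q : ℝ) - 1) ≤ ∑ i : Fin q, ∑ j : Fin q, A i j := by
    calc (q : ℝ) * ((q : ℝ) - 1)
        ≤ ∑ i : Fin q, ∑ j : Fin q, lam i * A i j * lam j := hquad
      _ = ∑ i : Fin q, ∑ j : Fin q, A i j := by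
          apply Finset.sum_congr rfl; intro i _
          apply Finset.sum_congr rfl; intro j _
          rw [hlam i, hlam j]; ring
  intro a b hab
  by_contra hA
  have hA0 : A a b = 0 := (h01 a b).resolve_right hA
  have hlt : ∑ i : Fin q, ∑ j : Fin q, A i j
      < ∑ i : Fin q, ∑ j : Fin q, (if i = j then (0:ℝ) else 1) := by
    rw [← Finset.sum_product', ← Finset.sum_product' (f := fun i j => A i j)]
    apply Finset.sum_lt_sum
    · rintro ⟨i, j⟩ _
      by_cases h : i = j
      · subst h; simp [hdiag i]
      · simp only [if_neg h]
        rcases h01 i j with h0 | h1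
        · rw [h0]; norm_num
        · rw [h1]
    · exact ⟨(a, b), Finset.mem_univ _, by simp [hab, hA0]⟩
  have hcount : ∑ i : Fin q, ∑ j : Fin q, (if i = j then (0:ℝ) else 1)
      = (q : ℝ) * ((q : ℝ) - 1) := by
    have : ∀ i : Fin q, ∑ j : Fin q, (if i = j then (0:ℝ) else 1) = (q : ℝ) - 1 := by
      intro i
      have : ∀ j : Fin q, (if i = j then (0:ℝ) else 1) = 1 - (if i = j then 1 else 0) := by
        intro j; by_cases h : i = j <;> simp [h]
      rw [Finset.sum_congr rfl fun j _ => this j]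
      simp [Finset.sum_sub_distrib]
    rw [Finset.sum_congr rfl fun i _ => this i]
    simp [mul_sub]
  rw [hcount] at hlt
  linarith
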